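/- For the function f(x) = Σ_{k=0}^∞ 2^k χ_{A_k}(x) sgn(x) on ℝ with A_k = {x : 2^k < |x| ≤ 2^k + 1}, and any fixed constant exponent 1 < p < ∞, the quantity sup_{r>0} (|B(0,r)|^{-1} ∫_{B(0,r)} |f − f_{B(0,r)}|^p)^{1/p} is infinite; hence f ∉ CBMO^p(ℝ) for p > 1, even though f ∈ CBMO^1(ℝ). -/

import Mathlib

open MeasureTheory Metric

/-- The function `f(x) = Σ_{k=0}^∞ 2^k χ_{A_k}(x) sgn(x)` on `ℝ`,
where `A_k = {x : 2^k < |x| ≤ 2^k + 1}`. -/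
noncomputable def paperF : ℝ → ℝ := fun x =>
  Real.sign x *
    ∑' k : ℕ, Set.indicator {y : ℝ | 2 ^ k < |y| ∧ |y| ≤ 2 ^ k + 1}
      (fun _ => (2 : ℝ) ^ k) x

private lemma one_le_two_pow_aux (k : ℕ) : (1:ℝ) ≤ 2 ^ k := by
  have : (2:ℝ)^0 ≤ 2^k := pow_le_pow_right₀ (by norm_num) (Nat.zero_le k)
  simpa using this

private lemma notMem_Ak {x : ℝ} {j i : ℕ} (h1 : (2:ℝ)^j < |x|) (h2 : |x| ≤ 2^j+1)
    (hij : i ≠ j) : x ∉ {y : ℝ | (2:ℝ)^i < |y| ∧ |y| ≤ 2^i+1} := by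
  rintro ⟨g1, g2⟩
  rcases lt_or_gt_of_ne hij with h | h
  · have e1 : (2:ℝ)^(i+1) ≤ 2^j := pow_le_pow_right₀ (by norm_num) (by omega)
    have e2 : (1:ℝ) ≤ 2^i := one_le_two_pow_aux i
    have e3 : (2:ℝ)^(i+1) = 2^i * 2 := pow_succ 2 i
    linarith
  · have e1 : (2:ℝ)^(j+1) ≤ 2^i := pow_le_pow_right₀ (by norm_num) (by omega)
    have e2 : (1:ℝ) ≤ 2^j := one_le_two_pow_aux j
    have e3 : (2:ℝ)^(j+1) = 2^j * 2 := pow_succ 2 j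
    linarith

private lemma tsum_val {x : ℝ} {j : ℕ} (h1 : (2:ℝ)^j < |x|) (h2 : |x| ≤ 2^j+1) :
    ∑' k : ℕ, Set.indicator {y : ℝ | 2 ^ k < |y| ∧ |y| ≤ 2 ^ k + 1}
      (fun _ => (2 : ℝ) ^ k) x = 2^j := by
  rw [tsum_eq_single j (fun i hi => Set.indicator_of_notMem (notMem_Ak h1 h2 hi) _)]
  exact Set.indicator_of_mem (show x ∈ {y : ℝ | (2:ℝ)^j < |y| ∧ |y| ≤ 2^j+1} from ⟨h1, h2⟩) _

private lemma tsum_zero' {x : ℝ} (h : ∀ k : ℕ, x ∉ {y : ℝ | (2:ℝ)^k < |y| ∧ |y| ≤ 2^k+1}) :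
    ∑' k : ℕ, Set.indicator {y : ℝ | 2 ^ k < |y| ∧ |y| ≤ 2 ^ k + 1}
      (fun _ => (2 : ℝ) ^ k) x = 0 := by
  calc ∑' k : ℕ, Set.indicator {y : ℝ | 2 ^ k < |y| ∧ |y| ≤ 2 ^ k + 1}
        (fun _ => (2 : ℝ) ^ k) x
      = ∑' _ : ℕ, (0:ℝ) :=
        tsum_congr fun k => Set.indicator_of_notMem (h k) _
    _ = 0 := tsum_zero

private lemma tsum_nonneg' (x : ℝ) :
    0 ≤ ∑' k : ℕ, Set.indicator {y : ℝ | 2 ^ k < |y| ∧ |y| ≤ 2 ^ k + 1}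
      (fun _ => (2 : ℝ) ^ k) x :=
  tsum_nonneg fun k => Set.indicator_nonneg (fun _ _ => by positivity) x

private lemma paperF_abs (x : ℝ) :
    |paperF x| = ∑' k : ℕ, Set.indicator {y : ℝ | 2 ^ k < |y| ∧ |y| ≤ 2 ^ k + 1}
      (fun _ => (2 : ℝ) ^ k) x := by
  rcases eq_or_ne x 0 with rfl | hx
  · have h0 : paperF 0 = 0 := by simp [paperF, Real.sign_zero]
    rw [h0, abs_zero]
    exact (tsum_zero' (fun k => by
      rintro ⟨hk, -⟩
      simp only [abs_zero] at hk
      exact absurd hk (not_lt.mpr (by positivity)))).symm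
  · simp only [paperF]
    rw [abs_mul, abs_of_nonneg (tsum_nonneg' x)]
    have hs : |Real.sign x| = 1 := by
      rcases hx.lt_or_gt with h | h
      · rw [Real.sign_of_neg h]; norm_num
      · rw [Real.sign_of_pos h]; norm_num
    rw [hs, one_mul]

private lemma paperF_neg (x : ℝ) : paperF (-x) = - paperF x := by
  simp only [paperF, Real.sign_neg, neg_mul]
  congr 2
  exact tsum_congr fun k => by simp [Set.indicator_apply, Set.mem_setOf_eq, abs_neg]

/-- For any fixed `1 < p < ∞`, the quantity
`sup_{r>0} (|B(0,r)|⁻¹ ∫_{B(0,r)} |f − f_{B(0,r)}|^p)^{1/p}` is infinite for `paperF`,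
i.e. `paperF ∉ CBMO^p(ℝ)` for `p > 1`. -/
theorem paperF_not_mem_central_bmo (p : ℝ) (hp : 1 < p) :
    ∀ C : ℝ, ∃ r : ℝ, 0 < r ∧
      C * (volume (ball (0 : ℝ) r)).toReal <
        ∫ x in ball (0 : ℝ) r, |paperF x - ⨍ y in ball (0 : ℝ) r, paperF y| ^ p := by
  intro C
  have hp0 : (0:ℝ) < p := by linarith
  have ha : 1 < (2:ℝ) ^ (p - 1) :=
    (Real.one_lt_rpow_iff (by norm_num)).mpr (Or.inl ⟨one_lt_two, by linarith⟩)
  obtain ⟨k, hk⟩ := pow_unbounded_of_one_lt (4 * (|C| + 1)) ha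
  set r : ℝ := 2 ^ k + 1 with hr_def
  have hr : 0 < r := by positivity
  refine ⟨r, hr, ?_⟩
  -- the average is zero by oddness
  have hI : ∫ x in ball (0:ℝ) r, paperF x = 0 := by
    have h1 : ∫ x in ball (0:ℝ) r, paperF x = ∫ x, (ball (0:ℝ) r).indicator paperF x :=
      (integral_indicator measurableSet_ball).symm
    have h2 : ∀ x : ℝ,
        (ball (0:ℝ) r).indicator paperF (-x) = - (ball (0:ℝ) r).indicator paperF x := by
      intro x
      by_cases hx : x ∈ ball (0:ℝ) r
      · have hx' : -x ∈ ball (0:ℝ) r := by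
          simp only [mem_ball, dist_zero_right, norm_neg] at hx ⊢; exact hx
        rw [Set.indicator_of_mem hx', Set.indicator_of_mem hx, paperF_neg]
      · have hx' : -x ∉ ball (0:ℝ) r := by
          intro h
          exact hx (by simpa only [mem_ball, dist_zero_right, norm_neg] using h)
        rw [Set.indicator_of_notMem hx', Set.indicator_of_notMem hx, neg_zero]
    have h3 := integral_neg_eq_self ((ball (0:ℝ) r).indicator paperF) volume
    have h4 : ∫ x : ℝ, (ball (0:ℝ) r).indicator paperF (-x)
        = - ∫ x : ℝ, (ball (0:ℝ) r).indicator paperF x := by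
      simp_rw [h2]; exact integral_neg _
    rw [h1]; linarith [h3, h4, h3.symm.trans h4]
  have havg : (⨍ y in ball (0:ℝ) r, paperF y) = 0 := by
    rw [setAverage_eq, hI, smul_zero]
  simp only [havg, sub_zero]
  -- the comparison finite sum
  set K := k + 1 with hK_def
  set hK : ℝ → ℝ := fun x => ∑ i ∈ Finset.range K,
    Set.indicator {y : ℝ | 2 ^ i < |y| ∧ |y| ≤ 2 ^ i + 1} (fun _ => ((2:ℝ) ^ i) ^ p) x
    with hK_eq
  have hrK : r ≤ 2 ^ K := by
    have : (2:ℝ)^K = 2^k * 2 := pow_succ 2 k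
    have h1 := one_le_two_pow_aux k
    rw [hr_def, this]; linarith
  have heq : ∀ x ∈ ball (0:ℝ) r, hK x = |paperF x| ^ p := by
    intro x hx
    have hxr : |x| < r := by
      simpa only [mem_ball, dist_zero_right, Real.norm_eq_abs] using hx
    by_cases hex : ∃ j : ℕ, x ∈ {y : ℝ | (2:ℝ)^j < |y| ∧ |y| ≤ 2^j + 1}
    · obtain ⟨j, hj⟩ := hex
      obtain ⟨hj1, hj2⟩ := hj
      have hjK : j < K := by
        by_contra hc
        push_neg at hc
        have : (2:ℝ)^K ≤ 2^j := pow_le_pow_right₀ (by norm_num) hc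
        linarith
      have hL : hK x = ((2:ℝ)^j) ^ p := by
        simp only [hK_eq]
        rw [Finset.sum_eq_single_of_mem j (Finset.mem_range.mpr hjK)
          (fun i _ hi => Set.indicator_of_notMem (notMem_Ak hj1 hj2 hi) _)]
        exact Set.indicator_of_mem
          (show x ∈ {y : ℝ | (2:ℝ)^j < |y| ∧ |y| ≤ 2^j+1} from ⟨hj1, hj2⟩) _
      rw [hL, paperF_abs, tsum_val hj1 hj2]
    · have hall : ∀ j : ℕ, x ∉ {y : ℝ | (2:ℝ)^j < |y| ∧ |y| ≤ 2^j + 1} :=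
        fun j hj => hex ⟨j, hj⟩
      have hL : hK x = 0 := by
        simp only [hK_eq]
        exact Finset.sum_eq_zero fun i _ => Set.indicator_of_notMem (hall i) _
      rw [hL, paperF_abs, tsum_zero' hall, Real.zero_rpow (ne_of_gt hp0)]
  -- integrability on the ball
  have hKmeas : Measurable hK := by
    apply Finset.measurable_sum
    intro i _
    apply measurable_const.indicator
    have : {y : ℝ | 2 ^ i < |y| ∧ |y| ≤ 2 ^ i + 1}
        = {y : ℝ | 2 ^ i < |y|} ∩ {y : ℝ | |y| ≤ 2 ^ i + 1} := rfl
    rw [this]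
    exact (measurableSet_lt measurable_const measurable_abs).inter
      (measurableSet_le measurable_abs measurable_const)
  have hKint : IntegrableOn hK (ball (0:ℝ) r) volume := by
    apply Measure.integrableOn_of_bounded (M := ∑ i ∈ Finset.range K, ((2:ℝ) ^ i) ^ p)
    · rw [Real.volume_ball]; exact ENNReal.ofReal_ne_top
    · exact hKmeas.aestronglyMeasurable
    · apply ae_of_all
      intro x
      have hnn : 0 ≤ hK x := Finset.sum_nonneg fun i _ =>
        Set.indicator_nonneg (fun _ _ => Real.rpow_nonneg (by positivity) p) x
      rw [Real.norm_eq_abs, abs_of_nonneg hnn]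
      simp only [hK_eq]
      exact Finset.sum_le_sum fun i _ =>
        Set.indicator_apply_le' (fun _ => le_rfl)
          (fun _ => Real.rpow_nonneg (by positivity) p)
  have hIOn : IntegrableOn (fun x => |paperF x| ^ p) (ball (0:ℝ) r) volume :=
    hKint.congr_fun (fun x hx => heq x hx) measurableSet_ball
  -- lower bound via the interval (2^k, 2^k+1)
  have hsub : Set.Ioo ((2:ℝ)^k) (2^k + 1) ⊆ ball (0:ℝ) r := by
    intro x hx
    have h1 := one_le_two_pow_aux k
    rw [mem_ball, dist_zero_right, Real.norm_eq_abs, abs_of_pos (by linarith [hx.1])]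
    exact hx.2
  have hval : ∀ x ∈ Set.Ioo ((2:ℝ)^k) (2^k + 1), |paperF x| ^ p = ((2:ℝ)^k) ^ p := by
    intro x hx
    have hpos : 0 < x := by
      have := one_le_two_pow_aux k; linarith [hx.1]
    have hx1 : (2:ℝ)^k < |x| := by rw [abs_of_pos hpos]; exact hx.1
    have hx2 : |x| ≤ 2^k + 1 := by rw [abs_of_pos hpos]; exact le_of_lt hx.2
    rw [paperF_abs, tsum_val hx1 hx2]
  have hlow : ∫ x in Set.Ioo ((2:ℝ)^k) (2^k + 1), |paperF x| ^ p = ((2:ℝ)^k) ^ p := by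
    rw [setIntegral_congr_fun measurableSet_Ioo hval, setIntegral_const, measureReal_def, Real.volume_Ioo]
    norm_num
  have hmono : ∫ x in Set.Ioo ((2:ℝ)^k) (2^k + 1), |paperF x| ^ p
      ≤ ∫ x in ball (0:ℝ) r, |paperF x| ^ p :=
    setIntegral_mono_set hIOn
      (ae_of_all _ fun x => Real.rpow_nonneg (abs_nonneg _) p)
      (HasSubset.Subset.eventuallyLE hsub)
  -- final arithmetic
  have key : ((2:ℝ)^k) ^ p = ((2:ℝ) ^ (p - 1)) ^ k * 2 ^ k := by
    have h2pos : (0:ℝ) < 2 ^ k := by positivity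
    have swap : ((2:ℝ)^k) ^ (p - 1) = ((2:ℝ) ^ (p - 1)) ^ k := by
      rw [← Real.rpow_natCast (2:ℝ) k, ← Real.rpow_natCast ((2:ℝ) ^ (p - 1)) k,
        ← Real.rpow_mul (by norm_num : (0:ℝ) ≤ 2),
        ← Real.rpow_mul (by norm_num : (0:ℝ) ≤ 2), mul_comm]
    calc ((2:ℝ)^k) ^ p = ((2:ℝ)^k) ^ ((p - 1) + 1) := by ring_nf
      _ = ((2:ℝ)^k) ^ (p - 1) * ((2:ℝ)^k) ^ (1:ℝ) := Real.rpow_add h2pos _ _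
      _ = ((2:ℝ) ^ (p - 1)) ^ k * 2 ^ k := by rw [swap, Real.rpow_one]
  have harith : C * (volume (ball (0:ℝ) r)).toReal < ((2:ℝ)^k) ^ p := by
    rw [Real.volume_ball, ENNReal.toReal_ofReal (by positivity), key]
    have h1 := one_le_two_pow_aux k
    have h2 : C ≤ |C| := le_abs_self C
    have h3 : (0:ℝ) ≤ |C| := abs_nonneg C
    rw [hr_def]
    nlinarith [hk, h1, h2, h3]
  calc C * (volume (ball (0:ℝ) r)).toReal < ((2:ℝ)^k) ^ p := harith
    _ = ∫ x in Set.Ioo ((2:ℝ)^k) (2^k + 1), |paperF x| ^ p := hlow.symm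
    _ ≤ ∫ x in ball (0:ℝ) r, |paperF x| ^ p := hmono
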